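/- arXiv:1910.09025 — 3 statements merged into one kernel-verified Lean document; each statement's English description precedes it below -/
import Mathlib

section
/- Let n1, nc, nd be natural numbers with nc < n1, let S1d be a real n1 × nd matrix, Sdc a real nd × nc matrix, Sdd a real nd × nd matrix, and form the block matrix G = [[0, S1d], [Sdc, Sdd]] of size (n1 + nd) × (nc + nd). Then there exists a nonzero vector u ∈ ℝ^{n1+nd} with uᵀ G = 0; consequently, for any symmetric positive definite weight matrices D (of size (n1+nd) × (n1+nd)) and E (of size (nc+nd) × (nc+nd)) and every γ > 0, there exists a nonzero u with uᵀ G x < γ ‖u‖_D ‖x‖_E for every nonzero x ∈ ℝ^{nc+nd}, i.e. the matrix inf-sup condition inf_{u≠0} sup_{x≠0} (uᵀ G x)/(‖u‖_D ‖x‖_E) ≥ γ fails for every γ > 0. (Matrix form of Theorem 3.2: the second weak inf-sup condition fails whenever the displacement-gradient space has fewer degrees of freedom than the displacement test space.) -/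
open Matrix

/-- Weighted norm `‖w‖_D = sqrt(wᵀ D w)` for a weight matrix `D`. -/
noncomputable def weightedNorm {ι : Type*} [Fintype ι] (D : Matrix ι ι ℝ) (w : ι → ℝ) : ℝ :=
  Real.sqrt (w ⬝ᵥ (D *ᵥ w))

/-- If `nc < n1`, then the block matrix `G = [[0, S1d],[Sdc, Sdd]]` has a nonzero vector `u`
with `uᵀ G = 0`, and consequently the matrix inf-sup condition for `G` fails for every
constant `γ > 0` and all symmetric positive definite weight matrices. -/
theorem infsup_fails_of_gradient_dofs_lt_displacement_dofs
    (n1 nc nd : ℕ) (hlt : nc < n1)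
    (S1d : Matrix (Fin n1) (Fin nd) ℝ)
    (Sdc : Matrix (Fin nd) (Fin nc) ℝ)
    (Sdd : Matrix (Fin nd) (Fin nd) ℝ) :
    (∃ u : Fin n1 ⊕ Fin nd → ℝ, u ≠ 0 ∧
        ∀ x : Fin nc ⊕ Fin nd → ℝ,
          u ⬝ᵥ (Matrix.fromBlocks 0 S1d Sdc Sdd *ᵥ x) = 0) ∧
      (∀ (D : Matrix (Fin n1 ⊕ Fin nd) (Fin n1 ⊕ Fin nd) ℝ)
          (E : Matrix (Fin nc ⊕ Fin nd) (Fin nc ⊕ Fin nd) ℝ),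
        D.PosDef → E.PosDef →
        ∀ γ : ℝ, 0 < γ →
          ∃ u : Fin n1 ⊕ Fin nd → ℝ, u ≠ 0 ∧
            ∀ x : Fin nc ⊕ Fin nd → ℝ, x ≠ 0 →
              u ⬝ᵥ (Matrix.fromBlocks 0 S1d Sdc Sdd *ᵥ x) <
                γ * weightedNorm D u * weightedNorm E x) := by
  set G := Matrix.fromBlocks 0 S1d Sdc Sdd with hG
  have hninj : ¬ Function.Injective G.vecMulLinear := by
    intro hinj
    have := LinearMap.finrank_le_finrank_of_injective hinj
    simp [Module.finrank_pi] at this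
    omega
  have hker : ∃ u : Fin n1 ⊕ Fin nd → ℝ, u ≠ 0 ∧ u ᵥ* G = 0 := by
    rw [← LinearMap.ker_eq_bot] at hninj
    rcases Submodule.exists_mem_ne_zero_of_ne_bot hninj with ⟨u, hu, hu0⟩
    exact ⟨u, hu0, hu⟩
  obtain ⟨u, hu0, huG⟩ := hker
  have key : ∀ x : Fin nc ⊕ Fin nd → ℝ, u ⬝ᵥ (G *ᵥ x) = 0 := by
    intro x
    rw [Matrix.dotProduct_mulVec, huG, zero_dotProduct]
  refine ⟨⟨u, hu0, key⟩, ?_⟩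
  intro D E hD hE γ hγ
  refine ⟨u, hu0, ?_⟩
  intro x hx
  rw [key x]
  have hDu : 0 < u ⬝ᵥ (D *ᵥ u) := by simpa using hD.dotProduct_mulVec_pos hu0
  have hEx : 0 < x ⬝ᵥ (E *ᵥ x) := by simpa using hE.dotProduct_mulVec_pos hx
  have h1 : 0 < weightedNorm D u := Real.sqrt_pos.mpr hDu
  have h2 : 0 < weightedNorm E x := Real.sqrt_pos.mpr hEx
  positivity
end

section
/- Let X and Y be real normed vector spaces, let b : X × Y → ℝ be a continuous bilinear form, and let Z_h ⊆ X and Y_h ⊆ Y be finite-dimensional subspaces with dim Z_h = dim Y_h ≥ 1. Suppose that for every continuous linear functional f : Y → ℝ there exists a unique z_h ∈ Z_h with b(z_h, y_h) = f(y_h) for all y_h ∈ Y_h. Then there exists β_h > 0 such that for every nonzero y_h ∈ Y_h there exists a nonzero z_h ∈ Z_h with b(z_h, y_h) ≥ β_h ‖z_h‖_X ‖y_h‖_Y. (Unique solvability of the discrete linear problem for arbitrary data implies a (possibly mesh-dependent) positive inf-sup constant.) -/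
set_option maxHeartbeats 1000000
set_option synthInstance.maxHeartbeats 400000


/-- If `dim Z_h = dim Y_h ≥ 1` and the discrete linear problem `b(z_h, y_h) = f(y_h)` for all
`y_h ∈ Y_h` has a unique solution `z_h ∈ Z_h` for every continuous linear functional `f`, then
the discrete inf-sup condition holds with some (possibly mesh-dependent) constant `β_h > 0`. -/
theorem infsup_of_discrete_problem_unique_solution
    (X Y : Type*) [NormedAddCommGroup X] [NormedSpace ℝ X]
    [NormedAddCommGroup Y] [NormedSpace ℝ Y]
    (b : X →L[ℝ] Y →L[ℝ] ℝ)
    (Zh : Subspace ℝ X) (Yh : Subspace ℝ Y)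
    [FiniteDimensional ℝ Zh] [FiniteDimensional ℝ Yh]
    (hdim : Module.finrank ℝ Zh = Module.finrank ℝ Yh)
    (hpos : 1 ≤ Module.finrank ℝ Yh)
    (hsolve : ∀ f : Y →L[ℝ] ℝ, ∃! z : X, z ∈ Zh ∧ ∀ y ∈ Yh, b z y = f y) :
    ∃ βh : ℝ, 0 < βh ∧
      ∀ y ∈ Yh, y ≠ 0 → ∃ z ∈ Zh, z ≠ 0 ∧ βh * ‖z‖ * ‖y‖ ≤ b z y := by
  classical
  set Φ : Yh →L[ℝ] (Zh →L[ℝ] ℝ) :=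
    ((ContinuousLinearMap.compL ℝ Zh X ℝ).flip Zh.subtypeL).comp
      (b.flip.comp Yh.subtypeL) with hΦ
  have hΦapp : ∀ (y : Yh) (z : Zh), Φ y z = b (z : X) (y : Y) := fun y z => rfl
  have hposΦ : ∀ y : Yh, y ≠ 0 → 0 < ‖Φ y‖ := by
    intro y hy
    have hy' : (y : Y) ≠ 0 := fun h => hy (Subtype.ext h)
    obtain ⟨f, hf1, hfy⟩ := exists_dual_vector ℝ (y : Y) (norm_ne_zero_iff.mpr hy')
    obtain ⟨z, ⟨hzZ, hzb⟩, -⟩ := hsolve f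
    have hbzy : b z y = ‖(y : Y)‖ := by
      rw [hzb y y.2, hfy]; norm_num
    have hne : Φ y ⟨z, hzZ⟩ ≠ 0 := by
      rw [hΦapp, hbzy]
      exact ne_of_gt (norm_pos_iff.mpr hy')
    have h0 : Φ y ≠ (0 : Zh →L[ℝ] ℝ) := fun h => hne (by rw [h]; rfl)
    rcases (ContinuousLinearMap.opNorm_nonneg (Φ y)).lt_or_eq with h | h
    · exact h
    · exact absurd ((ContinuousLinearMap.opNorm_zero_iff _).mp h.symm) h0
  have hnt : Nontrivial Yh := Module.finrank_pos_iff.mp hpos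
  have hne : (Metric.sphere (0 : Yh) 1).Nonempty :=
    NormedSpace.sphere_nonempty.mpr zero_le_one
  have hcomp : IsCompact (Metric.sphere (0 : Yh) 1) := isCompact_sphere 0 1
  have hΦbound : ∀ v : Yh, ‖Φ v‖ ≤ ‖b‖ * ‖v‖ := by
    intro v
    apply ContinuousLinearMap.opNorm_le_bound _ (by positivity)
    intro z
    rw [hΦapp]
    calc ‖b (z : X) (v : Y)‖ ≤ ‖b‖ * ‖(z : X)‖ * ‖(v : Y)‖ := b.le_opNorm₂ _ _
      _ = ‖b‖ * ‖v‖ * ‖z‖ := by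
            have e1 : ‖(z : X)‖ = ‖z‖ := rfl
            have e2 : ‖(v : Y)‖ = ‖v‖ := rfl
            rw [e1, e2]; ring
  have hcont : Continuous fun y : Yh => ‖Φ y‖ := by
    have hl : LipschitzWith (Real.toNNReal ‖b‖) (fun y : Yh => ‖Φ y‖) := by
      apply LipschitzWith.of_dist_le_mul
      intro a c
      rw [Real.dist_eq, dist_eq_norm]
      have h1 : |‖Φ a‖ - ‖Φ c‖| ≤ ‖Φ a - Φ c‖ := by
        exact abs_norm_sub_norm_le (Φ a) (Φ c)
      have h2 : Φ a - Φ c = Φ (a - c) := by rw [map_sub]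
      rw [h2] at h1
      calc |‖Φ a‖ - ‖Φ c‖| ≤ ‖Φ (a - c)‖ := h1
        _ ≤ ‖b‖ * ‖a - c‖ := hΦbound _
        _ = ↑(Real.toNNReal ‖b‖) * ‖a - c‖ := by
              rw [Real.coe_toNNReal _ (norm_nonneg b)]
    exact hl.continuous
  obtain ⟨y₀, hy₀, hmin⟩ := hcomp.exists_isMinOn hne hcont.continuousOn
  have hy₀n : ‖y₀‖ = 1 := by simpa using hy₀
  have hβ : 0 < ‖Φ y₀‖ := hposΦ y₀ (by
    intro h; rw [h] at hy₀n; simp at hy₀n)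
  set β := ‖Φ y₀‖ with hβdef
  refine ⟨β / 2, by positivity, ?_⟩
  intro y hyY hy0
  have hyn : 0 < ‖y‖ := norm_pos_iff.mpr hy0
  set u : Yh := ‖y‖⁻¹ • (⟨y, hyY⟩ : Yh) with hu
  have hun : ‖u‖ = 1 := by
    rw [hu, norm_smul]
    have : ‖(⟨y, hyY⟩ : Yh)‖ = ‖y‖ := rfl
    rw [this]
    simp [abs_of_pos (inv_pos.mpr hyn), inv_mul_cancel₀ hyn.ne']
  have hmem : u ∈ Metric.sphere (0 : Yh) 1 := by simpa using hun
  have hle : β ≤ ‖Φ u‖ := hmin hmem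
  obtain ⟨z, hz1, hz2⟩ := (Φ u).exists_lt_apply_of_lt_opNorm (by linarith : β / 2 < ‖Φ u‖)
  -- choose sign
  set z' : Zh := if 0 ≤ Φ u z then z else -z with hz'
  have hΦuz' : β / 2 < Φ u z' := by
    rw [hz']
    rcases le_or_gt 0 (Φ u z) with h | h
    · rw [if_pos h]
      calc β / 2 < ‖Φ u z‖ := hz2
        _ = Φ u z := by rw [Real.norm_eq_abs, abs_of_nonneg h]
    · rw [if_neg (not_le.mpr h), map_neg]
      calc β / 2 < ‖Φ u z‖ := hz2
        _ = -(Φ u z) := by rw [Real.norm_eq_abs, abs_of_neg h]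
  have hz'n : ‖z'‖ < 1 := by
    rw [hz']
    rcases le_or_gt 0 (Φ u z) with h | h
    · rw [if_pos h]; exact hz1
    · rw [if_neg (not_le.mpr h), norm_neg]; exact hz1
  have hz'ne : z' ≠ 0 := by
    intro h
    rw [h, map_zero] at hΦuz'
    linarith
  refine ⟨(z' : X), z'.2, ?_, ?_⟩
  · exact fun h => hz'ne (Subtype.ext h)
  · have hΦuz'eq : Φ u z' = ‖y‖⁻¹ * b (z' : X) y := by
      rw [hΦapp]
      have : ((u : Yh) : Y) = ‖y‖⁻¹ • y := by rw [hu]; rfl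
      rw [this, map_smul, smul_eq_mul]
    have hby : b (z' : X) y = ‖y‖ * Φ u z' := by
      rw [hΦuz'eq]
      field_simp
    rw [hby]
    have h1 : β / 2 * ‖(z' : X)‖ ≤ β / 2 := by
      have h' : ‖(z' : X)‖ = ‖z'‖ := rfl
      rw [h']
      exact mul_le_of_le_one_right (by linarith : (0:ℝ) ≤ β / 2) hz'n.le
    have h2 : β / 2 * ‖(z' : X)‖ ≤ Φ u z' := le_of_lt (lt_of_le_of_lt h1 hΦuz')
    calc β / 2 * ‖(z' : X)‖ * ‖y‖ ≤ Φ u z' * ‖y‖ :=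
          mul_le_mul_of_nonneg_right h2 (norm_nonneg y)
      _ = ‖y‖ * Φ u z' := mul_comm _ _
end

section
/- Fix n ≥ 1 and μ, λ ∈ ℝ. The Neo-Hookean constitutive map P(F) = μ F − μ F^{-T} + 2λ log(det(FᵀF)) F^{-T}, defined on invertible matrices F ∈ ℝ^{n×n}, is Fréchet differentiable at every invertible F, and its derivative in the direction M ∈ ℝ^{n×n} equals μ M + (μ − 2λ log(det(FᵀF))) F^{-T} Mᵀ F^{-T} + 4λ tr(F⁻¹ M) F^{-T}. (The formula for the elasticity tensor A(K):M used in the bilinear form (3.2), with F = I + K.) -/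
open Matrix

attribute [local instance] Matrix.frobeniusNormedAddCommGroup Matrix.frobeniusNormedSpace
attribute [local instance] Matrix.frobeniusNormedRing Matrix.frobeniusNormedAlgebra

/-- Determinant as a continuous multilinear map in the rows. -/
noncomputable def detCMM (n : ℕ) : ContinuousMultilinearMap ℝ (fun _ : Fin n => (Fin n → ℝ)) ℝ :=
  MultilinearMap.mkContinuous
    (Matrix.detRowAlternating (n := Fin n) (R := ℝ)).toMultilinearMap (n.factorial : ℝ)
    (fun m => by
      have : Matrix.detRowAlternating (n := Fin n) (R := ℝ) m = (Matrix.of m).det := rfl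
      rw [AlternatingMap.coe_multilinearMap, this, Matrix.det_apply']
      have h1 : ∀ σ : Equiv.Perm (Fin n),
          ‖(Equiv.Perm.sign σ : ℝ) * ∏ i, Matrix.of m (σ i) i‖ ≤ ∏ i, ‖m i‖ := by
        intro σ
        rw [norm_mul]
        have hs : ‖((Equiv.Perm.sign σ : ℤ) : ℝ)‖ = 1 := by
          rcases Int.units_eq_one_or (Equiv.Perm.sign σ) with h | h <;> simp [h]
        rw [hs, one_mul, Real.norm_eq_abs, Finset.abs_prod]
        calc ∏ i, |Matrix.of m (σ i) i| ≤ ∏ i, ‖m (σ i)‖ :=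
            Finset.prod_le_prod (fun i _ => abs_nonneg _)
              (fun i _ => norm_le_pi_norm (m (σ i)) i)
          _ = ∏ i, ‖m i‖ := Equiv.prod_comp σ (fun i => ‖m i‖)
      calc ‖∑ σ : Equiv.Perm (Fin n), (Equiv.Perm.sign σ : ℝ) * ∏ i, Matrix.of m (σ i) i‖
          ≤ ∑ σ : Equiv.Perm (Fin n), ∏ i, ‖m i‖ :=
            (norm_sum_le _ _).trans (Finset.sum_le_sum fun σ _ => h1 σ)
        _ = (n.factorial : ℝ) * ∏ i, ‖m i‖ := by
            rw [Finset.sum_const, Finset.card_univ, Fintype.card_perm, Fintype.card_fin, nsmul_eq_mul])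

/-- The identity, as a linear equivalence between matrices (Frobenius norm) and
the pi type. -/
noncomputable def matPi (n : ℕ) : Matrix (Fin n) (Fin n) ℝ ≃L[ℝ] (Fin n → Fin n → ℝ) :=
  LinearEquiv.toContinuousLinearEquiv (LinearEquiv.refl ℝ (Matrix (Fin n) (Fin n) ℝ))

/-- The derivative of the determinant. -/
noncomputable def detDeriv {n : ℕ} (F : Matrix (Fin n) (Fin n) ℝ) :
    Matrix (Fin n) (Fin n) ℝ →L[ℝ] ℝ :=
  LinearMap.toContinuousLinearMap
    { toFun := fun M => (F.adjugate * M).trace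
      map_add' := fun a b => by simp [Matrix.mul_add]
      map_smul' := fun c a => by simp [Matrix.mul_smul] }

@[simp] lemma detDeriv_apply {n : ℕ} (F M : Matrix (Fin n) (Fin n) ℝ) :
    detDeriv F M = (F.adjugate * M).trace := rfl

theorem det_hasFDerivAt {n : ℕ} (F : Matrix (Fin n) (Fin n) ℝ) :
    HasFDerivAt (fun A : Matrix (Fin n) (Fin n) ℝ => A.det) (detDeriv F) F := by
  have h := (ContinuousMultilinearMap.hasFDerivAt (detCMM n) (matPi n F)).comp F
    ((matPi n).toContinuousLinearMap.hasFDerivAt (x := F))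
  have hfun : (fun A : Matrix (Fin n) (Fin n) ℝ => A.det) =
      (detCMM n) ∘ (matPi n).toContinuousLinearMap := by
    funext A
    rfl
  rw [hfun]
  refine h.congr_fderiv (Eq.symm ?_)
  ext M : 1
  change (F.adjugate * M).trace = (detCMM n).linearDeriv ((matPi n) F) ((matPi n) M)
  simp only [ContinuousMultilinearMap.linearDeriv_apply]
  have key : ∀ i : Fin n, (detCMM n)
      (Function.update ((matPi n) F) i ((matPi n) M i)) =
      (F.updateRow i (M i)).det := fun i => rfl
  have hrow : ∀ i : Fin n, (F.updateRow i (M i)).det = ∑ j, M i j * F.adjugate j i := by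
    intro i
    rw [← Matrix.cramer_transpose_apply]
    have hMi : M i = ∑ j, M i j • (Pi.single j 1 : Fin n → ℝ) := by
      funext k
      simp [Pi.single_apply, Finset.sum_apply, eq_comm]
    have hc : Fᵀ.cramer (M i) i = ∑ j, M i j * Fᵀ.cramer (Pi.single j 1) i := by
      conv_lhs => rw [hMi]
      rw [map_sum, Finset.sum_apply]
      exact Finset.sum_congr rfl fun j _ => by rw [_root_.map_smul]; rfl
    rw [hc]
    exact Finset.sum_congr rfl fun j _ => by
      rw [Matrix.cramer_transpose_apply, Matrix.adjugate_apply]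
  simp only [key, hrow]
  rw [Matrix.trace]
  simp only [Matrix.diag, Matrix.mul_apply]
  rw [Finset.sum_comm]
  exact Finset.sum_congr rfl fun i _ => Finset.sum_congr rfl fun j _ => (mul_comm _ _)

/-- The Neo-Hookean first Piola–Kirchhoff stress
`P(F) = μ F − μ F^{-T} + 2λ log(det(FᵀF)) F^{-T}`. -/
noncomputable def neoHookeanStress (n : ℕ) (μ lam : ℝ) (F : Matrix (Fin n) (Fin n) ℝ) :
    Matrix (Fin n) (Fin n) ℝ :=
  μ • F - μ • (F⁻¹)ᵀ + (2 * lam * Real.log (Fᵀ * F).det) • (F⁻¹)ᵀ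

/-- The Neo-Hookean constitutive map `P` is differentiable at every invertible `F`, with
derivative in the direction `M` given by the elasticity tensor
`A(F)M = μ M + (μ − 2λ log det(FᵀF)) F^{-T} Mᵀ F^{-T} + 4λ tr(F⁻¹M) F^{-T}`. -/
theorem neoHookean_stress_deriv (n : ℕ) (hn : 1 ≤ n) (μ lam : ℝ) :
    ∀ F : Matrix (Fin n) (Fin n) ℝ, IsUnit F.det →
      DifferentiableAt ℝ (neoHookeanStress n μ lam) F ∧
      ∀ M : Matrix (Fin n) (Fin n) ℝ,
        fderiv ℝ (neoHookeanStress n μ lam) F M =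
          μ • M + (μ - 2 * lam * Real.log (Fᵀ * F).det) • ((F⁻¹)ᵀ * Mᵀ * (F⁻¹)ᵀ) +
            (4 * lam * (F⁻¹ * M).trace) • (F⁻¹)ᵀ := by
  intro F hF
  have hFu : IsUnit F := (Matrix.isUnit_iff_isUnit_det F).mpr hF
  obtain ⟨U, hU⟩ := hFu
  have hdet0 : F.det ≠ 0 := hF.ne_zero
  have hUinv : (↑U⁻¹ : Matrix (Fin n) (Fin n) ℝ) = F⁻¹ := by
    rw [Matrix.coe_units_inv, hU]
  -- derivative of the inverse
  have hinv : HasFDerivAt (Ring.inverse : Matrix (Fin n) (Fin n) ℝ → _)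
      (-(ContinuousLinearMap.mulLeftRight ℝ _ (F⁻¹) (F⁻¹))) F := by
    rw [← hUinv, ← hU]
    exact hasFDerivAt_ringInverse U
  -- transpose as a continuous linear map
  set T : Matrix (Fin n) (Fin n) ℝ →L[ℝ] Matrix (Fin n) (Fin n) ℝ :=
    LinearMap.toContinuousLinearMap
      (Matrix.transposeLinearEquiv (Fin n) (Fin n) ℝ ℝ).toLinearMap with hTdef
  have hT : ∀ A : Matrix (Fin n) (Fin n) ℝ, T A = Aᵀ := fun A => rfl
  have hTinv : HasFDerivAt (fun A : Matrix (Fin n) (Fin n) ℝ => (Ring.inverse A)ᵀ)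
      (T.comp (-(ContinuousLinearMap.mulLeftRight ℝ _ (F⁻¹) (F⁻¹)))) F :=
    (T.hasFDerivAt).comp F hinv
  -- derivative of the log–det part
  have hsq : HasFDerivAt (fun A : Matrix (Fin n) (Fin n) ℝ => A.det ^ 2)
      ((2 * F.det) • detDeriv F) F := by
    have h := (det_hasFDerivAt F).mul (det_hasFDerivAt F)
    have he : (fun A : Matrix (Fin n) (Fin n) ℝ => A.det ^ 2) =
        fun A : Matrix (Fin n) (Fin n) ℝ => A.det * A.det := by
      funext A; ring
    rw [he]
    refine h.congr_fderiv ?_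
    rw [two_mul, add_smul]
    exact rfl
  have hsqne : F.det ^ 2 ≠ 0 := pow_ne_zero _ hdet0
  have hlog : HasFDerivAt (fun A : Matrix (Fin n) (Fin n) ℝ => Real.log (A.det ^ 2))
      ((F.det ^ 2)⁻¹ • ((2 * F.det) • detDeriv F)) F :=
    by have := (Real.hasDerivAt_log hsqne).comp_hasFDerivAt F hsq; exact this
  have hc : HasFDerivAt
      (fun A : Matrix (Fin n) (Fin n) ℝ => 2 * lam * Real.log (A.det ^ 2))
      ((2 * lam) • ((F.det ^ 2)⁻¹ • ((2 * F.det) • detDeriv F))) F :=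
    hlog.const_mul (2 * lam)
  -- the whole map
  have hmain : HasFDerivAt
      (fun A : Matrix (Fin n) (Fin n) ℝ =>
        μ • A - μ • (Ring.inverse A)ᵀ + (2 * lam * Real.log (A.det ^ 2)) • (Ring.inverse A)ᵀ)
      _ F :=
    (((hasFDerivAt_id F).const_smul μ).sub (hTinv.const_smul μ)).add (hc.smul hTinv)
  have hfun : neoHookeanStress n μ lam =
      fun A : Matrix (Fin n) (Fin n) ℝ =>
        μ • A - μ • (Ring.inverse A)ᵀ + (2 * lam * Real.log (A.det ^ 2)) • (Ring.inverse A)ᵀ := by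
    funext A
    simp only [neoHookeanStress, Matrix.nonsing_inv_eq_ringInverse, Matrix.det_mul,
      Matrix.det_transpose, ← sq]
  rw [hfun]
  refine ⟨hmain.differentiableAt, fun M => ?_⟩
  rw [hmain.fderiv]
  have hlogdet : Real.log (Fᵀ * F).det = Real.log (F.det ^ 2) := by
    rw [Matrix.det_mul, Matrix.det_transpose, ← sq]
  have htr : (F⁻¹ * M).trace = (F.det)⁻¹ * (F.adjugate * M).trace := by
    rw [Matrix.inv_def, Ring.inverse_eq_inv', Matrix.smul_mul, Matrix.trace_smul, smul_eq_mul]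
  rw [hlogdet, htr, ← Matrix.nonsing_inv_eq_ringInverse]
  change μ • M - μ • T (-(F⁻¹ * M * F⁻¹)) + ((2 * lam * Real.log (F.det ^ 2)) • T (-(F⁻¹ * M * F⁻¹)) +
    (2 * lam * ((F.det ^ 2)⁻¹ * (2 * F.det * (F.adjugate * M).trace))) • (F⁻¹)ᵀ) = _
  simp only [ContinuousLinearMap.add_apply, ContinuousLinearMap.sub_apply,
    ContinuousLinearMap.smul_apply, ContinuousLinearMap.comp_apply,
    ContinuousLinearMap.smulRight_apply, ContinuousLinearMap.id_apply,
    ContinuousLinearMap.neg_apply, ContinuousLinearMap.mulLeftRight_apply, detDeriv_apply, hT,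
    Matrix.transpose_neg, Matrix.transpose_mul, smul_neg, smul_eq_mul, Matrix.mul_assoc]
  rw [sub_smul]
  have hscal : 2 * lam * ((F.det ^ 2)⁻¹ * (2 * F.det * (F.adjugate * M).trace)) =
      4 * lam * ((F.det)⁻¹ * (F.adjugate * M).trace) := by
    field_simp
    ring
  rw [hscal]
  module
end
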